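/- (Appendix A ordering of optimal force ratios) Let q satisfy 2√2/3 < q < 1. Then the six optimal force ratios are strictly ordered: x_mdf < x_Mη < x_MEF < x_MΩ < x_MPη < x_MPO < 0; equivalently, their absolute values satisfy q/2 < |x_MPη| < |x_MΩ| < 3q/4 < q/(1 + √(1 − q²)) < q, so the Euclidean distances of the corresponding points (X₁, X₂) from the equilibrium state (0,0) at fixed X₂ are strictly ordered in the same way. -/
import Mathlib


/-- Optimal force ratio for minimum dissipation function: `x_mdf = −q`. -/
noncomputable def xmdf (q : ℝ) : ℝ := -q

/-- Optimal force ratio for maximum power output: `x_MPO = −q/2`. -/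
noncomputable def xMPO (q : ℝ) : ℝ := -q / 2

/-- Optimal force ratio for maximum efficiency: `x_Mη = −q/(1 + √(1 − q²))`. -/
noncomputable def xMeta (q : ℝ) : ℝ := -q / (1 + Real.sqrt (1 - q ^ 2))

/-- Optimal force ratio for maximum ecological function: `x_MEF = −3q/4`. -/
noncomputable def xMEF (q : ℝ) : ℝ := -(3 * q) / 4

/-- Optimal force ratio for maximum omega function:
`x_MΩ = −q·(4 − q² + 4√(1 − q²))/(4·(1 + √(1 − q²))²)`. -/
noncomputable def xMOmega (q : ℝ) : ℝ :=
  -(q * (4 - q ^ 2 + 4 * Real.sqrt (1 - q ^ 2))) / (4 * (1 + Real.sqrt (1 - q ^ 2)) ^ 2)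

/-- Optimal force ratio for maximum efficient power:
`x_MPη = −(4 + q² − √(16 − 16q² + q⁴))/(6q)`. -/
noncomputable def xMPeta (q : ℝ) : ℝ :=
  -(4 + q ^ 2 - Real.sqrt (16 - 16 * q ^ 2 + q ^ 4)) / (6 * q)

/-- Euclidean distance from the equilibrium state `(0,0)` to the point `(X₁, X₂)` on the
operating line `X₁ = √(L₂₂/L₁₁)·x·X₂` of the regime with optimal force ratio `x`. -/
noncomputable def distEq (L11 L22 X2 x : ℝ) : ℝ :=
  Real.sqrt ((Real.sqrt (L22 / L11) * x * X2) ^ 2 + X2 ^ 2)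

lemma distEq_mono {L11 L22 X2 x y : ℝ} (h11 : 0 < L11) (h22 : 0 < L22) (hX : X2 ≠ 0)
    (hxy : x ^ 2 < y ^ 2) : distEq L11 L22 X2 x < distEq L11 L22 X2 y := by
  unfold distEq
  apply Real.sqrt_lt_sqrt (by positivity)
  have hc : (Real.sqrt (L22 / L11)) ^ 2 = L22 / L11 := Real.sq_sqrt (by positivity)
  have hX2 : 0 < X2 ^ 2 := by positivity
  have hcpos : 0 < L22 / L11 := by positivity
  have e : ∀ z : ℝ, (Real.sqrt (L22 / L11) * z * X2) ^ 2 = (L22 / L11) * X2 ^ 2 * z ^ 2 := by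
    intro z; rw [mul_pow, mul_pow, hc]; ring
  rw [e x, e y]
  nlinarith [mul_pos hcpos hX2]

set_option maxHeartbeats 800000 in
/-- (Appendix A ordering of optimal force ratios) For `2√2/3 < q < 1` the six optimal force
ratios are strictly ordered `x_mdf < x_Mη < x_MEF < x_MΩ < x_MPη < x_MPO < 0`; equivalently
`q/2 < |x_MPη| < |x_MΩ| < 3q/4 < q/(1 + √(1 − q²)) < q`, and consequently the Euclidean
distances of the corresponding points `(X₁, X₂)` from the equilibrium state `(0,0)` at
fixed `X₂` are strictly ordered in the same way. -/
theorem optimal_force_ratio_ordering (q : ℝ) (hq0 : 2 * Real.sqrt 2 / 3 < q) (hq1 : q < 1) :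
    (xmdf q < xMeta q ∧ xMeta q < xMEF q ∧ xMEF q < xMOmega q ∧
      xMOmega q < xMPeta q ∧ xMPeta q < xMPO q ∧ xMPO q < 0) ∧
    (q / 2 < |xMPeta q| ∧ |xMPeta q| < |xMOmega q| ∧ |xMOmega q| < 3 * q / 4 ∧
      3 * q / 4 < q / (1 + Real.sqrt (1 - q ^ 2)) ∧
      q / (1 + Real.sqrt (1 - q ^ 2)) < q) ∧
    (∀ L11 L22 X2 : ℝ, 0 < L11 → 0 < L22 → X2 ≠ 0 →
      distEq L11 L22 X2 (xMPO q) < distEq L11 L22 X2 (xMPeta q) ∧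
      distEq L11 L22 X2 (xMPeta q) < distEq L11 L22 X2 (xMOmega q) ∧
      distEq L11 L22 X2 (xMOmega q) < distEq L11 L22 X2 (xMEF q) ∧
      distEq L11 L22 X2 (xMEF q) < distEq L11 L22 X2 (xMeta q) ∧
      distEq L11 L22 X2 (xMeta q) < distEq L11 L22 X2 (xmdf q)) := by
  have hq : 0 < q := lt_trans (by positivity) hq0
  set s := Real.sqrt (1 - q ^ 2) with hsdef
  set r := Real.sqrt (16 - 16 * q ^ 2 + q ^ 4) with hrdef
  have h1q : 0 < 1 - q ^ 2 := by nlinarith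
  have hs0 : 0 < s := Real.sqrt_pos.mpr h1q
  have hs2 : s ^ 2 = 1 - q ^ 2 := Real.sq_sqrt h1q.le
  have hq2 : 8 / 9 < q ^ 2 := by
    have h2 : Real.sqrt 2 ^ 2 = 2 := Real.sq_sqrt (by norm_num)
    nlinarith [Real.sqrt_nonneg 2]
  have hs3 : s < 1 / 3 := by nlinarith
  have hr0 : 0 ≤ r := Real.sqrt_nonneg _
  have hr2 : r ^ 2 = 16 - 16 * q ^ 2 + q ^ 4 := Real.sq_sqrt (by nlinarith)
  have hrlt : r < 4 - 2 * q ^ 2 := by nlinarith [sq_nonneg q]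
  have hq2s : q ^ 2 = 1 - s ^ 2 := by linarith
  have hq4 : q ^ 4 = (1 - s ^ 2) ^ 2 := by
    rw [show q ^ 4 = (q ^ 2) ^ 2 from by ring, hq2s]
  have hrgt : 1 + 6 * s + s ^ 2 < 2 * r := by
    have h1 : (1 + 6 * s + s ^ 2) ^ 2 < (2 * r) ^ 2 := by
      have h1s : 0 < (1 - s) := by linarith
      nlinarith [pow_pos h1s 4]
    exact lt_of_pow_lt_pow_left₀ 2 (by positivity) h1
  -- the positive magnitudes
  have h12 : q / 2 < (4 + q ^ 2 - r) / (6 * q) := by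
    rw [div_lt_div_iff₀ (by norm_num) (by positivity)]
    nlinarith
  have h23 : (4 + q ^ 2 - r) / (6 * q) < q * (4 - q ^ 2 + 4 * s) / (4 * (1 + s) ^ 2) := by
    rw [div_lt_div_iff₀ (by positivity) (by positivity)]
    nlinarith [mul_pos (show (0:ℝ) < 2 * r - (1 + 6 * s + s ^ 2) by linarith)
      (show (0:ℝ) < 1 + s by linarith)]
  have h34 : q * (4 - q ^ 2 + 4 * s) / (4 * (1 + s) ^ 2) < 3 * q / 4 := by
    rw [div_lt_div_iff₀ (by positivity) (by norm_num)]
    nlinarith [mul_pos hq hs0, mul_pos (mul_pos hq hs0) hs0]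
  have h45 : 3 * q / 4 < q / (1 + s) := by
    rw [div_lt_div_iff₀ (by norm_num) (by positivity)]
    nlinarith
  have h56 : q / (1 + s) < q := by
    rw [div_lt_iff₀ (by positivity)]
    nlinarith [mul_pos hq hs0]
  have ha1 : 0 < q / 2 := by positivity
  have ha2 : 0 < (4 + q ^ 2 - r) / (6 * q) := lt_trans ha1 h12
  have ha3 : 0 < q * (4 - q ^ 2 + 4 * s) / (4 * (1 + s) ^ 2) := lt_trans ha2 h23
  -- expressions as negatives of magnitudes
  have e1 : xMPO q = -(q / 2) := by unfold xMPO; ring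
  have e2 : xMPeta q = -((4 + q ^ 2 - r) / (6 * q)) := by
    simp only [xMPeta]; rw [← hrdef]; ring
  have e3 : xMOmega q = -(q * (4 - q ^ 2 + 4 * s) / (4 * (1 + s) ^ 2)) := by
    simp only [xMOmega]; rw [← hsdef]; ring
  have e4 : xMEF q = -(3 * q / 4) := by unfold xMEF; ring
  have e5 : xMeta q = -(q / (1 + s)) := by
    simp only [xMeta]; rw [← hsdef]; ring
  have e6 : xmdf q = -q := rfl
  refine ⟨⟨?_, ?_, ?_, ?_, ?_, ?_⟩, ⟨?_, ?_, ?_, h45, h56⟩, ?_⟩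
  · rw [e5, e6]; linarith
  · rw [e5, e4]; linarith
  · rw [e4, e3]; linarith
  · rw [e3, e2]; linarith
  · rw [e2, e1]; linarith
  · rw [e1]; linarith
  · rw [e2, abs_neg, abs_of_pos ha2]; exact h12
  · rw [e2, e3, abs_neg, abs_neg, abs_of_pos ha2, abs_of_pos ha3]; exact h23
  · rw [e3, abs_neg, abs_of_pos ha3]; exact h34
  · intro L11 L22 X2 h11 h22 hX
    have sq_lt : ∀ a b : ℝ, 0 < a → a < b → a ^ 2 < b ^ 2 := by
      intro a b ha hab; nlinarith
    refine ⟨?_, ?_, ?_, ?_, ?_⟩ <;>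
      apply distEq_mono h11 h22 hX
    · rw [e1, e2, neg_pow, neg_pow]
      have := sq_lt _ _ ha1 h12; linarith
    · rw [e2, e3, neg_pow, neg_pow]
      have := sq_lt _ _ ha2 h23; linarith
    · rw [e3, e4, neg_pow, neg_pow]
      have := sq_lt _ _ ha3 h34; linarith
    · rw [e4, e5, neg_pow, neg_pow]
      have := sq_lt _ _ (by positivity) h45; linarith
    · rw [e5, e6]
      have := sq_lt _ _ (by positivity) h56; nlinarith
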